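/- arXiv:0801.3328 — 5 statements merged into one kernel-verified Lean document; each statement's English description precedes it below -/
import Mathlib

section
/- Let ψ = (P₁,…,P_p) : ℝ^m → ℝ^p with each Pᵢ weighted-homogeneous of degree α > 0 with positive weights. Fix s ∈ ℝ^p \ {0} and let X_s = {x ∈ ℝ^m : sⱼPᵢ(x) = sᵢPⱼ(x) for all i,j} (the fiber of the blow-up). Then for any x ∈ X_s with x ≠ 0 and such that X_s is a C¹ submanifold near x, the sphere of radius ‖x‖ centered at 0 is transversal to X_s at x; equivalently, the position vector x is not orthogonal to the tangent space of X_s at x. -/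
open scoped RealInnerProductSpace
open Filter Topology

/-- the sphere through `x` is transversal to `X_s` at `x ≠ 0`:
the tangent space (tangent cone) of `X_s` at `x` is not contained in `x^⊥`. -/
theorem sphere_transversal_to_fiber (m p : ℕ) (w : Fin m → ℝ) (hw : ∀ i, 0 < w i)
    (α : ℝ) (hα : 0 < α)
    (P : Fin p → EuclideanSpace ℝ (Fin m) → ℝ) (hP : ∀ i, ContDiff ℝ 1 (P i))
    (hhom : ∀ i, ∀ t : ℝ, 0 < t → ∀ x : EuclideanSpace ℝ (Fin m),
      P i (WithLp.toLp 2 (fun j => t ^ (w j) * x j)) = t ^ α * P i x)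
    (s : Fin p → ℝ) (hs : s ≠ 0)
    (Xs : Set (EuclideanSpace ℝ (Fin m)))
    (hXs : Xs = {x | ∀ i j, s j * P i x = s i * P j x})
    (x : EuclideanSpace ℝ (Fin m)) (hxX : x ∈ Xs) (hx : x ≠ 0) :
    ¬ (tangentConeAt ℝ Xs x ⊆ {v | ⟪v, x⟫ = 0}) := by
  intro hsub
  -- The curve `f t = (t ^ w j * x j)_j` and the Euler vector `v = (w j * x j)_j`.
  set f : ℝ → EuclideanSpace ℝ (Fin m) := fun t => WithLp.toLp 2 (fun j => t ^ (w j) * x j) with hf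
  set v : EuclideanSpace ℝ (Fin m) := WithLp.toLp 2 (fun j => w j * x j) with hv
  have hf1 : f 1 = x := by
    ext j; simp [hf]
  -- the curve stays in `Xs` for positive times
  have hmem : ∀ t : ℝ, 0 < t → f t ∈ Xs := by
    intro t ht
    rw [hXs]
    intro i j
    have hx' : s j * P i x = s i * P j x := by rw [hXs] at hxX; exact hxX i j
    show s j * P i (WithLp.toLp 2 (fun j => t ^ (w j) * x j)) = s i * P j (WithLp.toLp 2 (fun j => t ^ (w j) * x j))
    rw [hhom i t ht x, hhom j t ht x]
    linear_combination t ^ α * hx'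
  -- the curve has derivative `v` at `t = 1`
  have hderiv : HasDerivAt f v 1 := by
    have hg : HasDerivAt (fun t : ℝ => (fun j => t ^ (w j) * x j : Fin m → ℝ))
        (fun j => w j * x j) 1 := by
      rw [hasDerivAt_pi]
      intro j
      have h := (Real.hasDerivAt_rpow_const (p := w j) (Or.inl one_ne_zero)).mul_const (x j)
      simpa using h
    have e := (EuclideanSpace.equiv (Fin m) ℝ).symm
    exact ((EuclideanSpace.equiv (Fin m) ℝ).symm.toContinuousLinearMap.hasFDerivAt.comp_hasDerivAt
      1 hg)
  -- slope along the sequence `y n = 1 + 1/(n+1)`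
  set y : ℕ → ℝ := fun n => 1 + 1 / (n + 1 : ℝ) with hy
  have hypos : ∀ n, 0 < y n := by
    intro n
    have : 0 < 1 / (n + 1 : ℝ) := by positivity
    simp only [hy]; linarith
  have hyne : ∀ n, y n ≠ 1 := by
    intro n
    have : 0 < 1 / (n + 1 : ℝ) := by positivity
    simp only [hy]; intro h; linarith [h]
  have hytend : Tendsto y atTop (𝓝[≠] (1 : ℝ)) := by
    rw [tendsto_nhdsWithin_iff]
    constructor
    · have h0 : Tendsto (fun n : ℕ => 1 / (n + 1 : ℝ)) atTop (𝓝 0) :=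
        tendsto_one_div_add_atTop_nhds_zero_nat
      have := h0.const_add (1 : ℝ)
      simpa only [add_zero] using this
    · exact Filter.Eventually.of_forall fun n => hyne n
  have hslope : Tendsto (fun n => slope f 1 (y n)) atTop (𝓝 v) :=
    (hasDerivAt_iff_tendsto_slope.mp hderiv).comp hytend
  -- `v` belongs to the tangent cone
  have hvmem : v ∈ tangentConeAt ℝ Xs x := by
    refine mem_tangentConeAt_iff_exists_seq_norm_tendsto_atTop.mpr
      ⟨fun n => (n + 1 : ℝ), fun n => f (y n) - x, ?_, ?_, ?_⟩
    swap
    · exact Filter.Eventually.of_forall fun n => by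
        simpa using hmem (y n) (hypos n)
    · have h1 : Tendsto (fun n : ℕ => (n : ℝ) + 1) atTop atTop :=
        tendsto_atTop_add_const_right atTop 1 tendsto_natCast_atTop_atTop
      refine h1.congr fun n => ?_
      rw [Real.norm_eq_abs, abs_of_nonneg (by positivity)]
    · refine hslope.congr fun n => ?_
      have hne : (n + 1 : ℝ) ≠ 0 := by positivity
      rw [slope_def_module, hf1]
      have : y n - 1 = 1 / (n + 1 : ℝ) := by simp [hy]
      rw [this]
      rw [one_div, inv_inv]
  -- but `⟪v, x⟫ > 0`
  have hinner : ⟪v, x⟫ = ∑ j, w j * x j * x j := by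
    rw [PiLp.inner_apply]
    simp [hv, RCLike.inner_apply]
    exact Finset.sum_congr rfl fun j _ => by ring
  have hxj : ∃ j, x j ≠ 0 := by
    by_contra h
    push_neg at h
    apply hx
    ext j
    simpa using h j
  obtain ⟨j0, hj0⟩ := hxj
  have hpos : 0 < ∑ j, w j * x j * x j := by
    apply Finset.sum_pos'
      (fun j _ => by rw [mul_assoc]; exact mul_nonneg (hw j).le (mul_self_nonneg _))
    exact ⟨j0, Finset.mem_univ j0, by
      rw [mul_assoc]; exact mul_pos (hw j0) (mul_self_pos.mpr hj0)⟩
  have := hsub hvmem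
  simp only [Set.mem_setOf_eq] at this
  rw [hinner] at this
  linarith
end

section
/- Let P, Q : ℝ^m → ℝ be C¹ and set ψ = (P,Q), V = ψ⁻¹(0), and ω(x) = P(x)∇Q(x) − Q(x)∇P(x). For x ∉ V with x ≠ 0, the map ψ/‖ψ‖ restricted to the sphere through x (of radius ‖x‖) is a submersion at x if and only if the vectors ω(x) and x are linearly independent. -/
open scoped RealInnerProductSpace

/-- ψ/‖ψ‖ restricted to the sphere through `x` is a submersion at `x`
iff `ω(x)` and `x` are linearly independent. -/
theorem submersion_iff_omega_independent (m : ℕ)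
    (P Q : EuclideanSpace ℝ (Fin m) → ℝ) (hP : ContDiff ℝ 1 P) (hQ : ContDiff ℝ 1 Q)
    (ψ : EuclideanSpace ℝ (Fin m) → EuclideanSpace ℝ (Fin 2))
    (hψ : ∀ y, ψ y 0 = P y ∧ ψ y 1 = Q y)
    (Φ : EuclideanSpace ℝ (Fin m) → EuclideanSpace ℝ (Fin 2))
    (hΦ : ∀ y, Φ y = ‖ψ y‖⁻¹ • ψ y)
    (ω : EuclideanSpace ℝ (Fin m) → EuclideanSpace ℝ (Fin m))
    (hω : ∀ y, ω y = P y • gradient Q y - Q y • gradient P y)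
    (x : EuclideanSpace ℝ (Fin m)) (hxV : ψ x ≠ 0) (hx : x ≠ 0) :
    (∀ u : EuclideanSpace ℝ (Fin 2), ⟪u, Φ x⟫ = 0 →
        ∃ v : EuclideanSpace ℝ (Fin m), ⟪v, x⟫ = 0 ∧ fderiv ℝ Φ x v = u) ↔
      LinearIndependent ℝ ![ω x, x] := by
  have hPd : DifferentiableAt ℝ P x := (hP.differentiable one_ne_zero).differentiableAt
  have hQd : DifferentiableAt ℝ Q x := (hQ.differentiable one_ne_zero).differentiableAt
  set p : EuclideanSpace ℝ (Fin m) →L[ℝ] ℝ := fderiv ℝ P x with hp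
  set q : EuclideanSpace ℝ (Fin m) →L[ℝ] ℝ := fderiv ℝ Q x with hq
  set r : ℝ := ‖ψ x‖ with hr
  have hr0 : 0 < r := norm_pos_iff.mpr hxV
  let L := PiLp.continuousLinearEquiv 2 ℝ (fun _ : Fin 2 => ℝ)
  let pq : EuclideanSpace ℝ (Fin m) →L[ℝ] (Fin 2 → ℝ) := ContinuousLinearMap.pi ![p, q]
  have hg : HasFDerivAt (fun y i => ![P y, Q y] i) pq x := by
    apply hasFDerivAt_pi.2
    intro i
    fin_cases i
    · simpa using hPd.hasFDerivAt
    · simpa using hQd.hasFDerivAt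
  have hψeq : ψ = fun y => L.symm (fun i => ![P y, Q y] i) := by
    funext y; ext i; fin_cases i <;> simp [L, (hψ y).1, (hψ y).2]
  let Dψ : EuclideanSpace ℝ (Fin m) →L[ℝ] EuclideanSpace ℝ (Fin 2) :=
    L.symm.toContinuousLinearMap.comp pq
  have hψ' : HasFDerivAt ψ Dψ x := by
    rw [hψeq]
    exact (L.symm.toContinuousLinearMap.hasFDerivAt).comp x hg
  have hD0 : ∀ v, Dψ v 0 = p v := by intro v; simp [Dψ, pq, L]
  have hD1 : ∀ v, Dψ v 1 = q v := by intro v; simp [Dψ, pq, L]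
  -- the squared-norm function
  set h : EuclideanSpace ℝ (Fin m) → ℝ := fun y => ⟪ψ y, ψ y⟫ with hh
  set h' : EuclideanSpace ℝ (Fin m) →L[ℝ] ℝ :=
    (fderivInnerCLM ℝ (ψ x, ψ x)).comp (Dψ.prod Dψ) with hh'
  have hinner : HasFDerivAt h h' x := hψ'.inner (𝕜 := ℝ) hψ'
  have hhx : h x = r ^ 2 := real_inner_self_eq_norm_sq (ψ x)
  have hsq : Real.sqrt (h x) = r := by rw [hhx, Real.sqrt_sq hr0.le]
  have hs : HasFDerivAt (fun y => Real.sqrt (h y)) ((1 / (2 * r)) • h') x := by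
    have := (Real.hasDerivAt_sqrt (by rw [hhx]; positivity)).comp_hasFDerivAt x hinner
    rwa [hsq] at this
  have hρ : HasFDerivAt (fun y => (Real.sqrt (h y))⁻¹)
      ((-(r ^ 2)⁻¹) • ((1 / (2 * r)) • h')) x := by
    have hinv : HasDerivAt (fun t : ℝ => t⁻¹) (-(r ^ 2)⁻¹) r := hasDerivAt_inv hr0.ne'
    exact hinv.comp_hasFDerivAt_of_eq x hs hsq.symm
  have hΦeq : Φ = fun y => (Real.sqrt (h y))⁻¹ • ψ y := by
    funext y
    rw [hΦ y]
    congr 1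
    show ‖ψ y‖⁻¹ = (Real.sqrt ⟪ψ y, ψ y⟫)⁻¹
    rw [real_inner_self_eq_norm_sq, Real.sqrt_sq (norm_nonneg _)]
  set D : EuclideanSpace ℝ (Fin m) →L[ℝ] EuclideanSpace ℝ (Fin 2) :=
    r⁻¹ • Dψ + ((-(r ^ 2)⁻¹) • ((1 / (2 * r)) • h')).smulRight (ψ x) with hD
  have hΦ' : HasFDerivAt Φ D x := by
    rw [hΦeq]
    have := hρ.smul hψ'
    rwa [hsq, ← hD] at this
  have hfd : fderiv ℝ Φ x = D := hΦ'.fderiv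
  -- coordinates of ψ x
  set a : ℝ := P x with ha
  set b : ℝ := Q x with hb
  have hr2 : r ^ 2 = a ^ 2 + b ^ 2 := by
    rw [← hhx]
    show ⟪ψ x, ψ x⟫ = a ^ 2 + b ^ 2
    simp only [PiLp.inner_apply, Fin.sum_univ_two, RCLike.inner_apply, conj_trivial, (hψ x).1, (hψ x).2]
    ring
  -- the normal vector n
  set n : EuclideanSpace ℝ (Fin 2) := L.symm ![-b, a] with hn
  have hn0 : n 0 = -b := rfl
  have hn1 : n 1 = a := rfl
  have hinnψ : ∀ v, ⟪ψ x, Dψ v⟫ = a * p v + b * q v := by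
    intro v
    simp [PiLp.inner_apply, Fin.sum_univ_two, (hψ x).1, (hψ x).2, hD0, hD1]; ring
  have hinnψ' : ∀ v, ⟪Dψ v, ψ x⟫ = a * p v + b * q v := by
    intro v; rw [real_inner_comm]; exact hinnψ v
  -- key formula for the derivative
  have key : ∀ v, fderiv ℝ Φ x v = ((r⁻¹ * r⁻¹ * r⁻¹) * (a * q v - b * p v)) • n := by
    intro v
    rw [hfd]
    have hh'v : h' v = ⟪ψ x, Dψ v⟫ + ⟪Dψ v, ψ x⟫ := by
      rw [hh']
      simp only [ContinuousLinearMap.comp_apply, ContinuousLinearMap.prod_apply,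
        fderivInnerCLM_apply]
    have hDv : D v = r⁻¹ • Dψ v +
        ((-(r ^ 2)⁻¹) * ((1 / (2 * r)) * ((a * p v + b * q v) + (a * p v + b * q v)))) • ψ x := by
      rw [hD]
      simp only [ContinuousLinearMap.add_apply, ContinuousLinearMap.coe_smul',
        Pi.smul_apply, ContinuousLinearMap.smulRight_apply, smul_eq_mul, hh'v, hinnψ, hinnψ']
    rw [hDv]
    set s : ℝ := (-(r ^ 2)⁻¹) * ((1 / (2 * r)) * ((a * p v + b * q v) + (a * p v + b * q v)))
      with hs'
    set e : ℝ := (r⁻¹ * r⁻¹ * r⁻¹) * (a * q v - b * p v) with he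
    ext i
    fin_cases i
    · have h0 : r⁻¹ * Dψ v 0 + s * ψ x 0 = e * n 0 := by
        rw [hD0, hn0, (hψ x).1, ← ha, hs', he]
        field_simp
        linear_combination (2 * p v) * hr2
      simpa only [PiLp.add_apply, PiLp.smul_apply, smul_eq_mul, Fin.zero_eta] using h0
    · have h1 : r⁻¹ * Dψ v 1 + s * ψ x 1 = e * n 1 := by
        rw [hD1, hn1, (hψ x).2, ← hb, hs', he]
        field_simp
        linear_combination (2 * q v) * hr2
      simpa only [PiLp.add_apply, PiLp.smul_apply, smul_eq_mul, Fin.mk_one] using h1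
  -- inner products with ω x
  have hωv : ∀ v, ⟪ω x, v⟫ = a * q v - b * p v := by
    intro v
    rw [hω x, inner_sub_left, real_inner_smul_left, real_inner_smul_left]
    have hgP : ⟪gradient P x, v⟫ = p v := InnerProductSpace.toDual_symm_apply
    have hgQ : ⟪gradient Q x, v⟫ = q v := InnerProductSpace.toDual_symm_apply
    rw [hgP, hgQ]
  -- facts about n
  have hnψ : ⟪n, ψ x⟫ = 0 := by
    simp [PiLp.inner_apply, Fin.sum_univ_two, hn0, hn1, (hψ x).1, (hψ x).2, ← ha, ← hb]
    ring
  have hnn : ⟪n, n⟫ = r ^ 2 := by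
    simp only [PiLp.inner_apply, Fin.sum_univ_two, RCLike.inner_apply, conj_trivial, PiLp.inner_apply, Fin.sum_univ_two, hn0, hn1, hr2]
    ring
  have hnne : n ≠ 0 := by
    intro h0
    have : r ^ 2 = 0 := by rw [← hnn, h0, inner_zero_left]
    exact (by positivity : (0:ℝ) < r ^ 2).ne' this
  have hΦx : Φ x = r⁻¹ • ψ x := by rw [hΦ x]
  constructor
  · -- submersion → independence
    intro hsub
    obtain ⟨v, hvx, hvn⟩ := hsub n (by
      rw [hΦx, real_inner_smul_right, hnψ, mul_zero])
    have hωvne : ⟪ω x, v⟫ ≠ 0 := by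
      rw [hωv]
      intro h0
      have := (key v).symm.trans hvn
      rw [h0, mul_zero, zero_smul] at this
      exact hnne this.symm
    rw [LinearIndependent.pair_iff]
    intro s t hst
    have h1 : s * ⟪ω x, v⟫ + t * ⟪x, v⟫ = 0 := by
      have h2 : ⟪s • ω x + t • x, v⟫ = (0 : ℝ) := by rw [hst, inner_zero_left]
      rw [inner_add_left, real_inner_smul_left, real_inner_smul_left] at h2
      exact h2
    have hxv : ⟪x, v⟫ = 0 := by rw [real_inner_comm]; exact hvx
    rw [hxv, mul_zero, add_zero, mul_eq_zero] at h1
    have hs0 : s = 0 := h1.resolve_right hωvne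
    refine ⟨hs0, ?_⟩
    rw [hs0, zero_smul, zero_add] at hst
    exact (smul_eq_zero.mp hst).resolve_right hx
  · -- independence → submersion
    intro hind u hu
    have huψ : ⟪u, ψ x⟫ = 0 := by
      rw [hΦx, real_inner_smul_right] at hu
      rcases mul_eq_zero.mp hu with h0 | h0
      · exact absurd h0 (by positivity)
      · exact h0
    -- u is a multiple of n
    have hun : u = ((r ^ 2)⁻¹ * ⟪n, u⟫) • n := by
      have hrel : u 0 * a + u 1 * b = 0 := by
        have := huψ
        simp [PiLp.inner_apply, Fin.sum_univ_two, (hψ x).1, (hψ x).2, ← ha, ← hb] at this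
        linarith
      have hnu : ⟪n, u⟫ = -b * u 0 + a * u 1 := by
        simp [PiLp.inner_apply, Fin.sum_univ_two, hn0, hn1]; ring
      have hrne : r ^ 2 ≠ 0 := by positivity
      ext i
      fin_cases i
      · have h0 : u 0 = ((r ^ 2)⁻¹ * ⟪n, u⟫) * n 0 := by
          rw [hnu, hn0]
          field_simp
          linear_combination u 0 * hr2 + a * hrel
        simpa only [PiLp.smul_apply, smul_eq_mul, Fin.zero_eta] using h0
      · have h1 : u 1 = ((r ^ 2)⁻¹ * ⟪n, u⟫) * n 1 := by
          rw [hnu, hn1]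
          field_simp
          linear_combination u 1 * hr2 + b * hrel
        simpa only [PiLp.smul_apply, smul_eq_mul, Fin.mk_one] using h1
    -- the component of ω x orthogonal to x
    set w : EuclideanSpace ℝ (Fin m) := ω x - ((⟪ω x, x⟫ / ⟪x, x⟫)) • x with hw
    have hxx : ⟪x, x⟫ ≠ 0 := inner_self_ne_zero.mpr hx
    have hwx : ⟪w, x⟫ = 0 := by
      rw [hw, inner_sub_left, real_inner_smul_left, div_mul_cancel₀ _ hxx, sub_self]
    have hwne : w ≠ 0 := by
      intro h0
      rw [hw] at h0
      rw [LinearIndependent.pair_iff] at hind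
      have := (hind 1 (-(⟪ω x, x⟫ / ⟪x, x⟫))
        (by rw [one_smul, neg_smul, ← sub_eq_add_neg]; exact h0)).1
      norm_num at this
    have hωx_eq : ω x = w + (⟪ω x, x⟫ / ⟪x, x⟫) • x := by rw [hw, sub_add_cancel]
    have hωw : ⟪ω x, w⟫ = ⟪w, w⟫ := by
      conv_lhs => rw [hωx_eq]
      rw [inner_add_left, real_inner_smul_left, real_inner_comm w x, hwx, mul_zero, add_zero]
    have hww : ⟪w, w⟫ ≠ 0 := inner_self_ne_zero.mpr hwne
    -- take v a suitable multiple of w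
    set c : ℝ := (r * ⟪n, u⟫) / ⟪w, w⟫ with hc
    refine ⟨c • w, ?_, ?_⟩
    · rw [real_inner_smul_left, hwx, mul_zero]
    · rw [key (c • w)]
      have hωcw : a * q (c • w) - b * p (c • w) = ⟪ω x, c • w⟫ := (hωv _).symm
      rw [hωcw, real_inner_smul_right, hωw, hc, div_mul_cancel₀ _ hww]
      have hrne : r ≠ 0 := hr0.ne'
      have hscal : (r⁻¹ * r⁻¹ * r⁻¹) * (r * ⟪n, u⟫) = (r ^ 2)⁻¹ * ⟪n, u⟫ := by
        field_simp
      rw [hscal]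
      exact hun.symm
end

section
/- The map ψ : ℝ³ → ℝ², ψ(x,y,z) = (z(x²+y²+z²), y − x³), has an isolated critical point at the origin: the Jacobian matrix of ψ has rank 2 at every point (x,y,z) ≠ (0,0,0). -/
set_option maxHeartbeats 1000000 in
/-- `ψ(x,y,z) = (z(x²+y²+z²), y − x³)` has an isolated critical point at
the origin: its differential has rank 2 (is surjective onto ℝ²) at every nonzero point. -/
theorem example_isolated_critical_point
    (ψ : (Fin 3 → ℝ) → (Fin 2 → ℝ))
    (hψ : ∀ v, ψ v = ![v 2 * ((v 0) ^ 2 + (v 1) ^ 2 + (v 2) ^ 2), v 1 - (v 0) ^ 3]) :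
    ∀ v : Fin 3 → ℝ, v ≠ 0 → Function.Surjective (fderiv ℝ ψ v) := by
  intro v hv
  set P : Fin 3 → ((Fin 3 → ℝ) →L[ℝ] ℝ) :=
    fun i => ContinuousLinearMap.proj i with hP
  have hp : ∀ i : Fin 3, HasFDerivAt (fun u : Fin 3 → ℝ => u i) (P i) v :=
    fun i => hasFDerivAt_apply i v
  set L0 : (Fin 3 → ℝ) →L[ℝ] ℝ := (((v 0) ^ 2 + (v 1) ^ 2 + (v 2) ^ 2) • P 2)
        + (v 2) • ((2 * v 0) • P 0 + (2 * v 1) • P 1 + (2 * v 2) • P 2) with hL0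
  set L1 : (Fin 3 → ℝ) →L[ℝ] ℝ := P 1 - (3 * (v 0) ^ 2) • P 0 with hL1
  have h0 : HasFDerivAt (fun u : Fin 3 → ℝ => u 2 * (u 0 * u 0 + u 1 * u 1 + u 2 * u 2)) L0 v := by
    have h := (hp 2).mul ((((hp 0).mul (hp 0)).add ((hp 1).mul (hp 1))).add ((hp 2).mul (hp 2)))
    refine h.congr_fderiv ?_
    ext w
    simp [hL0, ContinuousLinearMap.smul_apply]
    ring
  have h1 : HasFDerivAt (fun u : Fin 3 → ℝ => u 1 - u 0 * u 0 * u 0) L1 v := by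
    have h := (hp 1).sub (((hp 0).mul (hp 0)).mul (hp 0))
    refine h.congr_fderiv ?_
    ext w
    simp [hL1, ContinuousLinearMap.smul_apply]
    ring
  have hΨ : HasFDerivAt ψ (ContinuousLinearMap.pi ![L0, L1]) v := by
    have hfun : ψ = fun u i =>
        (![fun u : Fin 3 → ℝ => u 2 * (u 0 * u 0 + u 1 * u 1 + u 2 * u 2),
           fun u : Fin 3 → ℝ => u 1 - u 0 * u 0 * u 0] : Fin 2 → (Fin 3 → ℝ) → ℝ) i u := by
      funext u i
      rw [hψ u]
      fin_cases i <;>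
        simp only [Fin.mk_zero, Fin.mk_one, Matrix.cons_val_zero, Matrix.cons_val_one,
          Matrix.head_cons] <;> ring
    rw [hfun]
    refine hasFDerivAt_pi.2 ?_
    intro i
    fin_cases i
    · simpa using h0
    · simpa using h1
  rw [hΨ.fderiv]
  have hs : (v 0) ^ 2 + (v 1) ^ 2 + 3 * (v 2) ^ 2 ≠ 0 := by
    intro h
    apply hv
    have e0 : v 0 = 0 := by nlinarith [sq_nonneg (v 0), sq_nonneg (v 1), sq_nonneg (v 2)]
    have e1 : v 1 = 0 := by nlinarith [sq_nonneg (v 0), sq_nonneg (v 1), sq_nonneg (v 2)]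
    have e2 : v 2 = 0 := by nlinarith [sq_nonneg (v 0), sq_nonneg (v 1), sq_nonneg (v 2)]
    funext i
    fin_cases i <;> simpa
  intro c
  refine ⟨![0, c 1, (c 0 - 2 * v 1 * v 2 * c 1) / ((v 0) ^ 2 + (v 1) ^ 2 + 3 * (v 2) ^ 2)], ?_⟩
  funext i
  fin_cases i
  · show L0 _ = c 0
    rw [hL0]
    simp [hP, ContinuousLinearMap.smul_apply, ContinuousLinearMap.proj_apply]
    have hs' : v 0 ^ 2 + v 1 ^ 2 + v 2 ^ 2 * 3 ≠ 0 := by rwa [mul_comm (v 2 ^ 2)]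
    field_simp
    ring
  · show L1 _ = c 1
    rw [hL1]
    simp [hP, ContinuousLinearMap.smul_apply, ContinuousLinearMap.proj_apply]
end

section
/- The map ψ : ℝ³ → ℝ², ψ(x,y,z) = (y(x²+y²+z²) + x², x), has an isolated critical point at the origin: its Jacobian has rank 2 at every nonzero point of some neighbourhood of 0, and its zero set V = ψ⁻¹(0) near 0 is {x = 0, y = 0} (the z-axis), so the link K_ε = V ∩ S²_ε is a pair of antipodal points. -/
private noncomputable def pr3 (i : Fin 3) : EuclideanSpace ℝ (Fin 3) →L[ℝ] ℝ :=
  EuclideanSpace.proj i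

private noncomputable def Dpsi (v : EuclideanSpace ℝ (Fin 3)) :
    EuclideanSpace ℝ (Fin 3) →L[ℝ] (Fin 2 → ℝ) :=
  ContinuousLinearMap.pi
    ![(2 * v 0 * v 1 + 2 * v 0) • pr3 0 + ((v 0 ^ 2 + 3 * v 1 ^ 2 + v 2 ^ 2) • pr3 1
        + (2 * v 1 * v 2) • pr3 2), pr3 0]

private lemma hasD (ψ : EuclideanSpace ℝ (Fin 3) → Fin 2 → ℝ)
    (hψ : ∀ v, ψ v = ![v 1 * ((v 0) ^ 2 + (v 1) ^ 2 + (v 2) ^ 2) + (v 0) ^ 2, v 0])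
    (v : EuclideanSpace ℝ (Fin 3)) : HasFDerivAt ψ (Dpsi v) v := by
  apply hasFDerivAt_pi''
  intro i
  have hp : ∀ j : Fin 3, HasFDerivAt (fun x : EuclideanSpace ℝ (Fin 3) => x j) (pr3 j) v :=
    by intro j; exact (pr3 j).hasFDerivAt
  fin_cases i
  · have h1 : HasFDerivAt (fun x : EuclideanSpace ℝ (Fin 3) =>
        x 1 * (x 0 * x 0 + x 1 * x 1 + x 2 * x 2) + x 0 * x 0)
        ((v 1 • (((v 0 • pr3 0 + v 0 • pr3 0) + (v 1 • pr3 1 + v 1 • pr3 1))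
            + (v 2 • pr3 2 + v 2 • pr3 2))
          + (v 0 * v 0 + v 1 * v 1 + v 2 * v 2) • pr3 1)
          + (v 0 • pr3 0 + v 0 • pr3 0)) v :=
      ((hp 1).mul ((((hp 0).mul (hp 0)).add ((hp 1).mul (hp 1))).add
        ((hp 2).mul (hp 2)))).add ((hp 0).mul (hp 0))
  
    have heq : (fun x : EuclideanSpace ℝ (Fin 3) => ψ x 0) =
        fun x => x 1 * (x 0 * x 0 + x 1 * x 1 + x 2 * x 2) + x 0 * x 0 := by
      funext x; rw [hψ x]; simp; ring
    rw [show (⟨0, by norm_num⟩ : Fin 2) = 0 from rfl]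
    simp only [heq]
    convert h1 using 1
    case e'_4 => rfl
    case e'_5 => rfl
    case e'_6 => rfl
    case e'_8 => rfl
    case e'_9 => rfl
    rw [show (ContinuousLinearMap.proj 0).comp (Dpsi v)
        = ![(2 * v 0 * v 1 + 2 * v 0) • pr3 0 + ((v 0 ^ 2 + 3 * v 1 ^ 2 + v 2 ^ 2) • pr3 1
        + (2 * v 1 * v 2) • pr3 2), pr3 0] 0 from ContinuousLinearMap.proj_pi _ 0]
    ext u
    simp [pr3]
    ring
  · have heq : (fun x : EuclideanSpace ℝ (Fin 3) => ψ x 1) = fun x => x 0 := by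
      funext x; rw [hψ x]; simp
    rw [show (⟨1, by norm_num⟩ : Fin 2) = 1 from rfl]
    simp only [heq]
    rw [show (ContinuousLinearMap.proj 1).comp (Dpsi v)
        = ![(2 * v 0 * v 1 + 2 * v 0) • pr3 0 + ((v 0 ^ 2 + 3 * v 1 ^ 2 + v 2 ^ 2) • pr3 1
        + (2 * v 1 * v 2) • pr3 2), pr3 0] 1 from ContinuousLinearMap.proj_pi _ 1]
    exact hp 0

/-- `ψ(x,y,z) = (y(x²+y²+z²)+x², x)` has an isolated critical point at the
origin, its zero set near 0 is the z-axis, and the link is a pair of antipodal points. -/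
theorem example2_isolated_critical_point_and_link
    (ψ : EuclideanSpace ℝ (Fin 3) → Fin 2 → ℝ)
    (hψ : ∀ v, ψ v = ![v 1 * ((v 0) ^ 2 + (v 1) ^ 2 + (v 2) ^ 2) + (v 0) ^ 2, v 0])
    (V : Set (EuclideanSpace ℝ (Fin 3))) (hV : V = {v | ψ v = 0}) :
    (∃ U ∈ nhds (0 : EuclideanSpace ℝ (Fin 3)),
        (∀ v ∈ U, v ≠ 0 → Function.Surjective (fderiv ℝ ψ v)) ∧
        V ∩ U = {v | v 0 = 0 ∧ v 1 = 0} ∩ U) ∧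
      ∀ ε : ℝ, 0 < ε → ∃ c : EuclideanSpace ℝ (Fin 3), c ≠ -c ∧
        V ∩ Metric.sphere (0 : EuclideanSpace ℝ (Fin 3)) ε = {c, -c} := by
  -- V is exactly the z-axis
  have hVax : V = {v | v 0 = 0 ∧ v 1 = 0} := by
    rw [hV]
    ext v
    simp only [Set.mem_setOf_eq]
    rw [hψ v, funext_iff, Fin.forall_fin_two]
    simp only [Matrix.cons_val_zero, Matrix.cons_val_one, Matrix.head_cons, Pi.zero_apply]
    constructor
    · rintro ⟨h0, h1⟩
      refine ⟨h1, ?_⟩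
      rw [h1] at h0
      have h0' : v 1 * (v 1 ^ 2 + v 2 ^ 2) = 0 := by nlinarith [h0]
      rcases mul_eq_zero.mp h0' with h | h
      · exact h
      · have : v 1 ^ 2 = 0 := by nlinarith [sq_nonneg (v 1), sq_nonneg (v 2)]
        exact pow_eq_zero_iff (by norm_num) |>.mp this
    · rintro ⟨h0, h1⟩
      constructor <;> simp [h0, h1]
  constructor
  · refine ⟨Set.univ, Filter.univ_mem, ?_, by simp [hVax]⟩
    intro v _ hv w
    have hD := (hasD ψ hψ v).fderiv
    rw [hD]
    -- b > 0
    have hb : v 0 ^ 2 + 3 * v 1 ^ 2 + v 2 ^ 2 ≠ 0 := by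
      intro h
      apply hv
      have h0 : v 0 = 0 := by nlinarith [sq_nonneg (v 0), sq_nonneg (v 1), sq_nonneg (v 2)]
      have h1 : v 1 = 0 := by nlinarith [sq_nonneg (v 0), sq_nonneg (v 1), sq_nonneg (v 2)]
      have h2 : v 2 = 0 := by nlinarith [sq_nonneg (v 0), sq_nonneg (v 1), sq_nonneg (v 2)]
      ext i
      fin_cases i <;> simpa
    set a := 2 * v 0 * v 1 + 2 * v 0 with ha
    set b := v 0 ^ 2 + 3 * v 1 ^ 2 + v 2 ^ 2 with hbdef
    refine ⟨EuclideanSpace.single 0 (w 1) + EuclideanSpace.single 1 ((w 0 - a * w 1) / b), ?_⟩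
    funext i
    fin_cases i
    · show Dpsi v _ 0 = w 0
      simp only [Dpsi, ContinuousLinearMap.pi_apply, Matrix.cons_val_zero,
        ContinuousLinearMap.add_apply, ContinuousLinearMap.smul_apply]
      have e0 : ∀ j : Fin 3, pr3 j (EuclideanSpace.single 0 (w 1) +
          EuclideanSpace.single 1 ((w 0 - a * w 1) / b)) =
          (EuclideanSpace.single 0 (w 1) : EuclideanSpace ℝ (Fin 3)) j +
          (EuclideanSpace.single 1 ((w 0 - a * w 1) / b) : EuclideanSpace ℝ (Fin 3)) j :=
        fun j => rfl
      rw [e0 0, e0 1, e0 2]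
      simp [EuclideanSpace.single_apply]
      field_simp
      rw [ha]; ring
    · show Dpsi v _ 1 = w 1
      simp only [Dpsi, ContinuousLinearMap.pi_apply, Matrix.cons_val_one, Matrix.head_cons]
      show (EuclideanSpace.single 0 (w 1) : EuclideanSpace ℝ (Fin 3)) 0 +
          (EuclideanSpace.single 1 ((w 0 - a * w 1) / b) : EuclideanSpace ℝ (Fin 3)) 0 = w 1
      simp [EuclideanSpace.single_apply]
  · intro ε hε
    refine ⟨EuclideanSpace.single 2 ε, ?_, ?_⟩
    · intro h
      have := congrArg (· 2) h
      simp [EuclideanSpace.single_apply] at this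
      linarith
    · have hneg : (-(EuclideanSpace.single 2 ε) : EuclideanSpace ℝ (Fin 3)) =
          EuclideanSpace.single 2 (-ε) := by
        ext j; simp [EuclideanSpace.single_apply]; split <;> simp
      ext v
      simp only [Set.mem_inter_iff, hVax, Set.mem_setOf_eq, Metric.mem_sphere,
        Set.mem_insert_iff, Set.mem_singleton_iff, hneg]
      constructor
      · rintro ⟨⟨h0, h1⟩, hd⟩
        have hn : ‖v‖ = ε := by rwa [dist_zero_right] at hd
        have hn2 : |v 2| = ε := by
          rw [← hn, EuclideanSpace.norm_eq,
            show (Finset.univ : Finset (Fin 3)) = {0,1,2} by decide]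
          simp [h0, h1, Real.sqrt_sq_eq_abs, sq_abs]
        have hvs : ∀ t : ℝ, v 2 = t → v = EuclideanSpace.single 2 t := by
          intro t ht
          ext j
          fin_cases j <;> simp [EuclideanSpace.single_apply, h0, h1, ht]
        rcases abs_eq hε.le |>.mp hn2 with h | h
        · exact Or.inl (hvs ε h)
        · exact Or.inr (hvs (-ε) h)
      · rintro (h | h) <;> subst h <;>
          refine ⟨⟨by simp [EuclideanSpace.single_apply], by simp [EuclideanSpace.single_apply]⟩, ?_⟩ <;>
          rw [dist_zero_right, EuclideanSpace.norm_single] <;> simp [abs_of_pos hε]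
end

section
/- For ψ = (P, Q) : ℝ³ → ℝ² with P = y(x²+y²+z²) + x² and Q = x, define M = {(x,y,z) ∉ V : ∃λ ≠ 0, P∇Q − Q∇P = λ(x,y,z)}. Then the closure of M contains the origin; in fact, M ∩ {z = 0} contains points on the curve (x²+y²)² = yx² \ {0} arbitrarily close to 0. -/
open scoped RealInnerProductSpace

local notation "E3" => EuclideanSpace ℝ (Fin 3)

private lemma grad_comp (f : E3 → ℝ) (D : E3 →L[ℝ] ℝ) (v : E3)
    (h : HasFDerivAt f D v) (i : Fin 3) :
    gradient f v i = D (EuclideanSpace.single i 1) := by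
  have h1 : gradient f v = (InnerProductSpace.toDual ℝ E3).symm D := by
    rw [gradient, h.fderiv]
  have h2 : ⟪gradient f v, EuclideanSpace.single i (1:ℝ)⟫ = D (EuclideanSpace.single i 1) := by
    rw [h1, InnerProductSpace.toDual_symm_apply]
  rwa [EuclideanSpace.inner_single_right, starRingEnd_apply, star_trivial, one_mul] at h2

private lemma fderiv_P (v : E3) :
    HasFDerivAt (fun v : E3 => v 1 * ((v 0) ^ 2 + (v 1) ^ 2 + (v 2) ^ 2) + (v 0) ^ 2)
      ((((v 0) ^ 2 + (v 1) ^ 2 + (v 2) ^ 2) • EuclideanSpace.proj 1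
        + v 1 • ((2 * v 0) • EuclideanSpace.proj 0 + (2 * v 1) • EuclideanSpace.proj 1
            + (2 * v 2) • EuclideanSpace.proj 2))
        + (2 * v 0) • (EuclideanSpace.proj 0 : E3 →L[ℝ] ℝ)) v := by
  have h0 : HasFDerivAt (fun v : E3 => v 0) (EuclideanSpace.proj 0 : E3 →L[ℝ] ℝ) v := by
    exact (EuclideanSpace.proj (0 : Fin 3) : E3 →L[ℝ] ℝ).hasFDerivAt
  have h1 : HasFDerivAt (fun v : E3 => v 1) (EuclideanSpace.proj 1 : E3 →L[ℝ] ℝ) v := by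
    exact (EuclideanSpace.proj (1 : Fin 3) : E3 →L[ℝ] ℝ).hasFDerivAt
  have h2 : HasFDerivAt (fun v : E3 => v 2) (EuclideanSpace.proj 2 : E3 →L[ℝ] ℝ) v := by
    exact (EuclideanSpace.proj (2 : Fin 3) : E3 →L[ℝ] ℝ).hasFDerivAt
  have hsq0 := h0.mul h0
  have hsq1 := h1.mul h1
  have hsq2 := h2.mul h2
  have hsum := (hsq0.add hsq1).add hsq2
  have hmul := h1.mul hsum
  have h := hmul.add hsq0
  refine (h.congr_of_eventuallyEq (Filter.Eventually.of_forall fun w => ?_)).congr_fderiv ?_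
  · simp only [Pi.add_apply, Pi.mul_apply]; ring
  · ext w
    simp only [ContinuousLinearMap.add_apply, ContinuousLinearMap.coe_smul',
      Pi.smul_apply, smul_eq_mul, PiLp.proj_apply, Pi.add_apply, Pi.mul_apply, Pi.pow_apply]
    ring

private lemma gradP_comp (v : E3) (i : Fin 3) :
    gradient (fun v : E3 => v 1 * ((v 0) ^ 2 + (v 1) ^ 2 + (v 2) ^ 2) + (v 0) ^ 2) v i =
      if i = 0 then 2 * v 0 * v 1 + 2 * v 0
      else if i = 1 then (v 0) ^ 2 + 3 * (v 1) ^ 2 + (v 2) ^ 2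
      else 2 * v 1 * v 2 := by
  rw [grad_comp _ _ _ (fderiv_P v) i]
  fin_cases i <;>
    simp [EuclideanSpace.single_apply] <;> ring

private lemma gradQ_comp (v : E3) (i : Fin 3) :
    gradient (fun v : E3 => v 0) v i = if i = 0 then 1 else 0 := by
  have h0 : HasFDerivAt (fun v : E3 => v 0) (EuclideanSpace.proj 0 : E3 →L[ℝ] ℝ) v := by
    exact (EuclideanSpace.proj (0 : Fin 3) : E3 →L[ℝ] ℝ).hasFDerivAt
  rw [grad_comp _ _ _ h0 i]
  fin_cases i <;> simp [EuclideanSpace.single_apply]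

private noncomputable def vpt (x y : ℝ) : E3 := (WithLp.equiv 2 (Fin 3 → ℝ)).symm ![x, y, 0]

private lemma key_point (x y : ℝ) (hx0 : 0 < x) (hy0 : 0 < y)
    (hcurve : (x ^ 2 + y ^ 2) ^ 2 = y * x ^ 2) :
    ∃ lam : ℝ, lam ≠ 0 ∧
      (fun v : E3 => v 1 * ((v 0) ^ 2 + (v 1) ^ 2 + (v 2) ^ 2) + (v 0) ^ 2) (vpt x y) •
          gradient (fun v : E3 => v 0) (vpt x y) -
        (fun v : E3 => v 0) (vpt x y) •
          gradient (fun v : E3 => v 1 * ((v 0) ^ 2 + (v 1) ^ 2 + (v 2) ^ 2) + (v 0) ^ 2)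
            (vpt x y)
        = lam • vpt x y := by
  have hv0 : vpt x y 0 = x := rfl
  have hv1 : vpt x y 1 = y := rfl
  have hv2 : vpt x y 2 = 0 := rfl
  refine ⟨-(x * (x ^ 2 + 3 * y ^ 2)) / y, ?_, ?_⟩
  · have hpos : 0 < x * (x ^ 2 + 3 * y ^ 2) := by positivity
    intro h
    rw [div_eq_zero_iff] at h
    rcases h with h | h
    · linarith
    · exact hy0.ne' h
  · ext i
    rw [PiLp.sub_apply, PiLp.smul_apply, PiLp.smul_apply, PiLp.smul_apply,
      gradP_comp, gradQ_comp]
    simp only [hv0, hv1, hv2, smul_eq_mul]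
    fin_cases i <;>
      simp only [Fin.zero_eta, Fin.mk_one, Fin.isValue,
        show ((0 : Fin 3) = 0) = True from by simp,
        show ((1 : Fin 3) = 0) = False from by simp,
        show ((1 : Fin 3) = 1) = True from by simp,
        show ((2 : Fin 3) = 0) = False from by simp,
        show ((2 : Fin 3) = 1) = False from by simp,
        show ((⟨2, by norm_num⟩ : Fin 3) = (2 : Fin 3)) from rfl,
        if_true, if_false, hv0, hv1, hv2]
    · rw [div_mul_eq_mul_div, eq_div_iff hy0.ne']
      nlinarith [hcurve]
    · rw [div_mul_eq_mul_div, eq_div_iff hy0.ne']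
      ring
    · have h2 : vpt x y ⟨2, by norm_num⟩ = 0 := hv2
      try rw [h2]
      ring

private lemma vpt_norm_sq (x y : ℝ) : ‖vpt x y‖ ^ 2 = x ^ 2 + y ^ 2 := by
  rw [vpt, EuclideanSpace.norm_eq, Real.sq_sqrt (by positivity)]
  rw [Fin.sum_univ_three]
  norm_num [sq_abs]
  rfl

/-- for `P = y(x²+y²+z²)+x²`, `Q = x`, the origin lies in the closure of
`M = {x ∉ V : ∃ λ ≠ 0, P∇Q − Q∇P = λx}`; in fact `M ∩ {z = 0}` contains points of the
curve `(x²+y²)² = yx²` arbitrarily close to `0`. -/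
theorem example2_M_accumulates_at_origin
    (P Q : EuclideanSpace ℝ (Fin 3) → ℝ)
    (hP : ∀ v, P v = v 1 * ((v 0) ^ 2 + (v 1) ^ 2 + (v 2) ^ 2) + (v 0) ^ 2)
    (hQ : ∀ v, Q v = v 0)
    (V : Set (EuclideanSpace ℝ (Fin 3))) (hV : V = {v | P v = 0 ∧ Q v = 0})
    (M : Set (EuclideanSpace ℝ (Fin 3)))
    (hM : M = {v | v ∉ V ∧ ∃ lam : ℝ, lam ≠ 0 ∧
      P v • gradient Q v - Q v • gradient P v = lam • v}) :
    (0 : EuclideanSpace ℝ (Fin 3)) ∈ closure M ∧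
      ∀ δ : ℝ, 0 < δ → ∃ v ∈ M, v ≠ 0 ∧ ‖v‖ < δ ∧ v 2 = 0 ∧
        ((v 0) ^ 2 + (v 1) ^ 2) ^ 2 = v 1 * (v 0) ^ 2 := by
  have hPf : P = fun v : E3 => v 1 * ((v 0) ^ 2 + (v 1) ^ 2 + (v 2) ^ 2) + (v 0) ^ 2 :=
    funext hP
  have hQf : Q = fun v : E3 => v 0 := funext hQ
  subst hPf hQf hV hM
  have key : ∀ δ : ℝ, 0 < δ → ∃ v, (v ∉ {v : E3 |
        (fun v : E3 => v 1 * ((v 0) ^ 2 + (v 1) ^ 2 + (v 2) ^ 2) + (v 0) ^ 2) v = 0 ∧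
        (fun v : E3 => v 0) v = 0} ∧ ∃ lam : ℝ, lam ≠ 0 ∧
      (fun v : E3 => v 1 * ((v 0) ^ 2 + (v 1) ^ 2 + (v 2) ^ 2) + (v 0) ^ 2) v •
          gradient (fun v : E3 => v 0) v -
        (fun v : E3 => v 0) v •
          gradient (fun v : E3 => v 1 * ((v 0) ^ 2 + (v 1) ^ 2 + (v 2) ^ 2) + (v 0) ^ 2) v
        = lam • v) ∧ v ≠ 0 ∧ ‖v‖ < δ ∧ v 2 = 0 ∧
        ((v 0) ^ 2 + (v 1) ^ 2) ^ 2 = v 1 * (v 0) ^ 2 := by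
    intro δ hδ
    set t : ℝ := min (δ ^ 2 / 4) (1 / 2) with ht
    have ht0 : 0 < t := lt_min (by positivity) (by norm_num)
    have ht1 : t ≤ 1 / 2 := min_le_right _ _
    have htδ : t ≤ δ ^ 2 / 4 := min_le_left _ _
    have hs0 : (0:ℝ) < 1 + t ^ 2 := by positivity
    set x : ℝ := t / (1 + t ^ 2) ^ 2 with hx
    set y : ℝ := t ^ 2 / (1 + t ^ 2) ^ 2 with hy
    have hx0 : 0 < x := by positivity
    have hy0 : 0 < y := by positivity
    have hcurve : (x ^ 2 + y ^ 2) ^ 2 = y * x ^ 2 := by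
      rw [hx, hy]
      field_simp
    have hxle : x ≤ t := by
      rw [hx]
      calc t / (1 + t ^ 2) ^ 2 ≤ t / 1 := by
            apply div_le_div_of_nonneg_left ht0.le one_pos
            nlinarith
        _ = t := div_one t
    have hyle : y ≤ t := by
      rw [hy]
      calc t ^ 2 / (1 + t ^ 2) ^ 2 ≤ t ^ 2 / 1 := by
            apply div_le_div_of_nonneg_left (by positivity) one_pos
            nlinarith
        _ = t ^ 2 := div_one _
        _ ≤ t := by nlinarith
    have hv0 : vpt x y 0 = x := rfl
    have hv1 : vpt x y 1 = y := rfl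
    have hv2 : vpt x y 2 = 0 := rfl
    refine ⟨vpt x y, ⟨?_, key_point x y hx0 hy0 hcurve⟩, ?_, ?_, hv2,
      by rw [hv0, hv1]; exact hcurve⟩
    · intro hmem
      exact hx0.ne' (by simpa [hv0] using hmem.2)
    · intro h
      exact hx0.ne' (by rw [← hv0, h]; rfl)
    · have h1 : ‖vpt x y‖ ^ 2 < δ ^ 2 := by
        rw [vpt_norm_sq]
        nlinarith
      nlinarith [norm_nonneg (vpt x y), sq_nonneg (‖vpt x y‖ - δ)]
  refine ⟨?_, key⟩
  rw [Metric.mem_closure_iff]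
  intro ε hε
  obtain ⟨v, hvM, _, hvn, _⟩ := key ε hε
  exact ⟨v, hvM, by rwa [dist_zero_left]⟩
end
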